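/- arXiv:2511.05258 — 4 statements merged into one kernel-verified Lean document; each statement's English description precedes it below -/
import Mathlib

section
/- Let x ∈ ℂⁿ and let B, C be complex n×n positive-semidefinite matrices with B + C = x xᴴ. Then there exist real numbers α, β ≥ 0 with α + β = 1 such that B = α • (x xᴴ) and C = β • (x xᴴ). In other words, any decomposition of a rank-one positive-semidefinite matrix into a sum of two positive-semidefinite matrices consists of scalar multiples of that matrix. -/
open Matrix
open scoped ComplexOrder

lemma vecMulVec_mulVec' {n : ℕ} (x y v : Fin n → ℂ) :
    Matrix.vecMulVec x y *ᵥ v = (y ⬝ᵥ v) • x := by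
  funext k
  simp [Matrix.mulVec, Matrix.vecMulVec_apply, dotProduct, Finset.mul_sum, mul_assoc,
    mul_comm, mul_left_comm]

lemma aux_scalar {n : ℕ} (x : Fin n → ℂ) (M : Matrix (Fin n) (Fin n) ℂ)
    (hM : M.PosSemidef)
    (hv : ∀ v, star x ⬝ᵥ v = 0 → M *ᵥ v = 0)
    (i0 : Fin n) (hx : x i0 ≠ 0) :
    ∃ α : ℝ, 0 ≤ α ∧ M = α • Matrix.vecMulVec x (star x) := by
  -- key relation: for all i j k, star (x j) * M k i = star (x i) * M k j
  have key : ∀ i j k : Fin n, star (x j) * M k i = star (x i) * M k j := by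
    intro i j k
    set v : Fin n → ℂ :=
      star (x j) • (Pi.single i (1:ℂ) : Fin n → ℂ) -
        star (x i) • (Pi.single j (1:ℂ) : Fin n → ℂ) with hvdef
    have hv0 : star x ⬝ᵥ v = 0 := by
      simp [hvdef, dotProduct_sub, dotProduct_single]
      ring
    have hMv := congrFun (hv v hv0) k
    have hexp : M *ᵥ v =
        star (x j) • (M *ᵥ (Pi.single i (1:ℂ) : Fin n → ℂ)) -
          star (x i) • (M *ᵥ (Pi.single j (1:ℂ) : Fin n → ℂ)) := by
      simp [hvdef, Matrix.mulVec_sub, Matrix.mulVec_smul]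
    rw [hexp] at hMv
    simp [sub_eq_zero] at hMv
    simpa using hMv
  have hdiag : (0 : ℂ) ≤ M i0 i0 := by
    have := hM.dotProduct_mulVec_nonneg (Pi.single i0 (1:ℂ))
    simpa [dotProduct, Pi.single_apply, apply_ite] using this
  obtain ⟨hre', him⟩ := Complex.nonneg_iff.mp hdiag
  set r : ℝ := (M i0 i0).re with hrdef
  have hre : 0 ≤ r := hre'
  have hMr : M i0 i0 = (r : ℂ) := by
    apply Complex.ext <;> simp [hrdef, ← him]
  set α : ℝ := r / Complex.normSq (x i0) with hαdef
  have hns : (Complex.normSq (x i0) : ℝ) ≠ 0 := by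
    simpa [Complex.normSq_eq_zero] using hx
  refine ⟨α, div_nonneg hre (Complex.normSq_nonneg _), ?_⟩
  have hαc : (α : ℂ) * (x i0 * star (x i0)) = M i0 i0 := by
    rw [hMr]
    have hmc : x i0 * star (x i0) = (Complex.normSq (x i0) : ℂ) := by
      simpa using Complex.mul_conj (x i0)
    rw [hmc, hαdef]
    push_cast
    field_simp
  have hrow : ∀ k, star (x i0) * M i0 k = star (x k) * M i0 i0 := fun k => key k i0 i0
  have hcol : ∀ k, x i0 * M k i0 = x k * M i0 i0 := by
    intro k
    have h1 := hrow k
    have h2 : M k i0 = star (M i0 k) := by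
      have := congrFun (congrFun hM.1 k) i0
      simpa [Matrix.conjTranspose_apply] using this.symm
    have h3 := congrArg star h1
    simp only [star_mul', star_star] at h3
    rw [h2, h3, hMr, Complex.star_def, Complex.conj_ofReal]
  funext k l
  have h1 : star (x i0) * M k l = star (x l) * M k i0 := key l i0 k
  have h2 := hcol k
  have hxs : star (x i0) ≠ 0 := star_ne_zero.mpr hx
  have hmain : (x i0 * star (x i0)) * M k l = star (x l) * (x k * M i0 i0) := by
    calc (x i0 * star (x i0)) * M k l = x i0 * (star (x i0) * M k l) := by ring
    _ = x i0 * (star (x l) * M k i0) := by rw [h1]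
    _ = star (x l) * (x i0 * M k i0) := by ring
    _ = star (x l) * (x k * M i0 i0) := by rw [h2]
  have hprod : (x i0 * star (x i0)) ≠ 0 := mul_ne_zero hx hxs
  have goal : M k l = (α : ℂ) * (x k * star (x l)) := by
    apply mul_left_cancel₀ hprod
    rw [hmain, ← hαc]
    ring
  simpa [Matrix.vecMulVec_apply, Complex.real_smul] using goal

/-- Any decomposition of a rank-one PSD matrix `x xᴴ` as a sum of two PSD matrices
consists of nonnegative scalar multiples of `x xᴴ`. -/
theorem rank_one_psd_decomposition (n : ℕ) (x : Fin n → ℂ)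
    (B C : Matrix (Fin n) (Fin n) ℂ)
    (hB : B.PosSemidef) (hC : C.PosSemidef)
    (h : B + C = Matrix.vecMulVec x (star x)) :
    ∃ α β : ℝ, 0 ≤ α ∧ 0 ≤ β ∧ α + β = 1 ∧
      B = α • Matrix.vecMulVec x (star x) ∧
      C = β • Matrix.vecMulVec x (star x) := by
  have hBv : ∀ v, star x ⬝ᵥ v = 0 → B *ᵥ v = 0 := by
    intro v hv
    have hsum : star v ⬝ᵥ (B *ᵥ v) + star v ⬝ᵥ (C *ᵥ v) = 0 := by
      have h1 : (B + C) *ᵥ v = (star x ⬝ᵥ v) • x := by rw [h, vecMulVec_mulVec']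
      have h2 : star v ⬝ᵥ ((B + C) *ᵥ v) = 0 := by rw [h1, hv]; simp
      simpa [Matrix.add_mulVec, dotProduct_add] using h2
    have hzB : star v ⬝ᵥ (B *ᵥ v) = 0 :=
      ((add_eq_zero_iff_of_nonneg (hB.dotProduct_mulVec_nonneg v) (hC.dotProduct_mulVec_nonneg v)).mp hsum).1
    exact (hB.dotProduct_mulVec_zero_iff v).mp hzB
  have hCv : ∀ v, star x ⬝ᵥ v = 0 → C *ᵥ v = 0 := by
    intro v hv
    have hsum : star v ⬝ᵥ (B *ᵥ v) + star v ⬝ᵥ (C *ᵥ v) = 0 := by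
      have h1 : (B + C) *ᵥ v = (star x ⬝ᵥ v) • x := by rw [h, vecMulVec_mulVec']
      have h2 : star v ⬝ᵥ ((B + C) *ᵥ v) = 0 := by rw [h1, hv]; simp
      simpa [Matrix.add_mulVec, dotProduct_add] using h2
    have hzC : star v ⬝ᵥ (C *ᵥ v) = 0 :=
      ((add_eq_zero_iff_of_nonneg (hB.dotProduct_mulVec_nonneg v) (hC.dotProduct_mulVec_nonneg v)).mp hsum).2
    exact (hC.dotProduct_mulVec_zero_iff v).mp hzC
  by_cases hx0 : x = 0
  · have hxv : ∀ v : Fin n → ℂ, star x ⬝ᵥ v = 0 := by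
      intro v; subst hx0; simp
    have hB0 : B = 0 := by
      ext i j
      have := congrFun (hBv (Pi.single j (1:ℂ)) (hxv _)) i
      simpa using this
    have hC0 : C = 0 := by
      ext i j
      have := congrFun (hCv (Pi.single j (1:ℂ)) (hxv _)) i
      simpa using this
    refine ⟨1, 0, zero_le_one, le_refl 0, by norm_num, ?_, ?_⟩
    · subst hx0; rw [hB0]; ext i j; simp [Matrix.vecMulVec_apply]
    · rw [hC0]; simp
  · obtain ⟨i0, hxi0⟩ : ∃ i0, x i0 ≠ 0 := by
      by_contra hc
      push_neg at hc
      exact hx0 (funext fun i => hc i)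
    obtain ⟨α, hα, hBeq⟩ := aux_scalar x B hB hBv i0 hxi0
    obtain ⟨β, hβ, hCeq⟩ := aux_scalar x C hC hCv i0 hxi0
    refine ⟨α, β, hα, hβ, ?_, hBeq, hCeq⟩
    have hii := congrFun (congrFun h i0) i0
    rw [hBeq, hCeq] at hii
    simp only [Matrix.add_apply, Matrix.smul_apply, Matrix.vecMulVec_apply,
      Complex.real_smul] at hii
    have hns : x i0 * star (x i0) ≠ 0 := mul_ne_zero hxi0 (star_ne_zero.mpr hxi0)
    have hc : ((α : ℂ) + β) = 1 := by
      apply mul_right_cancel₀ hns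
      rw [one_mul]
      linear_combination hii
    exact_mod_cast hc
end

section
/- Let d₁, d₂ be positive integers, x ∈ ℂ^{d₁}, z ∈ ℂ^{d₂}, and suppose (x xᴴ) ⊗ (z zᴴ) = B + C, where each of B and C is a finite sum of matrices of the form (u uᴴ) ⊗ (w wᴴ) with u ∈ ℂ^{d₁}, w ∈ ℂ^{d₂}. Then there exist real numbers α, β ≥ 0 with α + β = 1 such that B = α • ((x xᴴ) ⊗ (z zᴴ)) and C = β • ((x xᴴ) ⊗ (z zᴴ)). Hence every nonzero rank-one product matrix (x xᴴ) ⊗ (z zᴴ) spans an extreme ray of the bipartite PSD tensor cone. -/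
open Matrix Kronecker

/-- Membership in the bipartite PSD tensor cone: `M` is a finite sum of Kronecker products
of rank-one PSD matrices. -/
def InBipartitePSDCone {d₁ d₂ : ℕ} (M : Matrix (Fin d₁ × Fin d₂) (Fin d₁ × Fin d₂) ℂ) : Prop :=
  ∃ (r : ℕ) (u : Fin r → Fin d₁ → ℂ) (w : Fin r → Fin d₂ → ℂ),
    M = ∑ i, (Matrix.vecMulVec (u i) (star (u i))) ⊗ₖ (Matrix.vecMulVec (w i) (star (w i)))


lemma key_span {n : Type*} [Fintype n] [DecidableEq n]
    (v : n → ℂ) (r : ℕ) (u : Fin r → n → ℂ)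
    (h : Matrix.vecMulVec v (star v) = ∑ i, Matrix.vecMulVec (u i) (star (u i)))
    (i : Fin r) : ∃ c : ℂ, u i = c • v := by
  have hpt : ∀ k l, v k * (starRingEnd ℂ) (v l) = ∑ j, u j k * (starRingEnd ℂ) (u j l) := by
    intro k l
    have := congrFun (congrFun h k) l
    simpa [Matrix.vecMulVec_apply, Matrix.sum_apply] using this
  -- orthogonality: any y orthogonal to v is orthogonal to every u j
  have key : ∀ y : n → ℂ, (∑ l, (starRingEnd ℂ) (v l) * y l) = 0 →
      ∀ j, (∑ l, (starRingEnd ℂ) (u j l) * y l) = 0 := by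
    intro y hy j
    have expand : (starRingEnd ℂ) (∑ l, (starRingEnd ℂ) (v l) * y l) *
        (∑ l, (starRingEnd ℂ) (v l) * y l) =
        ∑ j, (starRingEnd ℂ) (∑ l, (starRingEnd ℂ) (u j l) * y l) *
          (∑ l, (starRingEnd ℂ) (u j l) * y l) := by
      have lhs : (starRingEnd ℂ) (∑ l, (starRingEnd ℂ) (v l) * y l) *
          (∑ l, (starRingEnd ℂ) (v l) * y l) =
          ∑ k, ∑ l, (starRingEnd ℂ) (y k) * y l * (v k * (starRingEnd ℂ) (v l)) := by
        rw [map_sum, Finset.sum_mul_sum]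
        refine Finset.sum_congr rfl fun k _ => Finset.sum_congr rfl fun l _ => ?_
        simp [_root_.map_mul]
        ring
      have rhs : ∀ j : Fin r, (starRingEnd ℂ) (∑ l, (starRingEnd ℂ) (u j l) * y l) *
          (∑ l, (starRingEnd ℂ) (u j l) * y l) =
          ∑ k, ∑ l, (starRingEnd ℂ) (y k) * y l * (u j k * (starRingEnd ℂ) (u j l)) := by
        intro j
        rw [map_sum, Finset.sum_mul_sum]
        refine Finset.sum_congr rfl fun k _ => Finset.sum_congr rfl fun l _ => ?_
        simp [_root_.map_mul]
        ring
      rw [lhs]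
      simp_rw [rhs, hpt, Finset.mul_sum]
      rw [Finset.sum_comm (γ := Fin r)]
      refine Finset.sum_congr rfl fun j _ => ?_
      rw [Finset.sum_comm]
    rw [hy, mul_zero] at expand
    have : ∀ j : Fin r, (starRingEnd ℂ) (∑ l, (starRingEnd ℂ) (u j l) * y l) *
        (∑ l, (starRingEnd ℂ) (u j l) * y l) =
        ((Complex.normSq (∑ l, (starRingEnd ℂ) (u j l) * y l) : ℝ) : ℂ) := by
      intro j; rw [mul_comm, Complex.mul_conj]
    rw [Finset.sum_congr rfl (fun j _ => this j)] at expand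
    have h0 : (∑ j, Complex.normSq (∑ l, (starRingEnd ℂ) (u j l) * y l)) = 0 := by
      have := expand.symm
      push_cast at this
      exact_mod_cast this
    have := (Finset.sum_eq_zero_iff_of_nonneg
      (fun j _ => Complex.normSq_nonneg _)).mp h0 j (Finset.mem_univ j)
    exact Complex.normSq_eq_zero.mp this
  by_cases hv : v = 0
  · refine ⟨0, ?_⟩
    funext k
    have := key (Pi.single k 1) (by simp [hv]) i
    simp [Pi.single_apply, Finset.sum_ite_eq'] at this
    simpa [hv] using (by simpa using congrArg (starRingEnd ℂ) this : u i k = 0)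
  · obtain ⟨k₀, hk₀⟩ : ∃ k, v k ≠ 0 := by
      by_contra hc; push_neg at hc; exact hv (funext hc)
    refine ⟨u i k₀ / v k₀, ?_⟩
    funext k
    by_cases hk : k = k₀
    · subst hk; simp [hk₀]
    · -- y = single k₀ (conj (v k)) - single k (conj (v k₀))
      set y : n → ℂ := Pi.single k₀ ((starRingEnd ℂ) (v k)) - Pi.single k ((starRingEnd ℂ) (v k₀)) with hy
      have horth : (∑ l, (starRingEnd ℂ) (v l) * y l) = 0 := by
        simp [hy, Pi.single_apply, mul_sub, Finset.sum_sub_distrib, Finset.sum_ite_eq',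
          mul_comm]
      have := key y horth i
      simp [hy, Pi.single_apply, mul_sub, Finset.sum_sub_distrib, Finset.sum_ite_eq'] at this
      have h2 : u i k₀ * v k = u i k * v k₀ := by
        have := congrArg (starRingEnd ℂ) (sub_eq_zero.mp this)
        simpa [_root_.map_mul, mul_comm] using this
      rw [Pi.smul_apply, smul_eq_mul, div_mul_eq_mul_div, eq_div_iff hk₀]
      linear_combination -h2

lemma kron_reshape {d₁ d₂ : ℕ} (x : Fin d₁ → ℂ) (z : Fin d₂ → ℂ) :
    (Matrix.vecMulVec x (star x)) ⊗ₖ (Matrix.vecMulVec z (star z)) =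
    Matrix.vecMulVec (fun p : Fin d₁ × Fin d₂ => x p.1 * z p.2)
      (star (fun p : Fin d₁ × Fin d₂ => x p.1 * z p.2)) := by
  ext ⟨i,j⟩ ⟨k,l⟩
  simp [Matrix.vecMulVec_apply, Matrix.kroneckerMap_apply, mul_comm, mul_left_comm, mul_assoc]

lemma smul_reshape {n : Type*} [Fintype n] (v : n → ℂ) (c : ℂ) :
    Matrix.vecMulVec (c • v) (star (c • v)) =
      Complex.normSq c • Matrix.vecMulVec v (star v) := by
  ext k l
  simp [Matrix.vecMulVec_apply, Matrix.smul_apply, Complex.real_smul, Complex.normSq_eq_conj_mul_self]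
  ring

/-- If a rank-one product matrix `(x xᴴ) ⊗ (z zᴴ)` decomposes as a sum of two elements of the
bipartite PSD tensor cone, the two summands are nonnegative scalar multiples of it: rank-one
product matrices span extreme rays of the cone. -/
theorem rank_one_product_extreme_ray (d₁ d₂ : ℕ) (hd₁ : 0 < d₁) (hd₂ : 0 < d₂)
    (x : Fin d₁ → ℂ) (z : Fin d₂ → ℂ)
    (B C : Matrix (Fin d₁ × Fin d₂) (Fin d₁ × Fin d₂) ℂ)
    (hB : InBipartitePSDCone B) (hC : InBipartitePSDCone C)
    (h : (Matrix.vecMulVec x (star x)) ⊗ₖ (Matrix.vecMulVec z (star z)) = B + C) :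
    ∃ α β : ℝ, 0 ≤ α ∧ 0 ≤ β ∧ α + β = 1 ∧
      B = α • ((Matrix.vecMulVec x (star x)) ⊗ₖ (Matrix.vecMulVec z (star z))) ∧
      C = β • ((Matrix.vecMulVec x (star x)) ⊗ₖ (Matrix.vecMulVec z (star z))) := by
  obtain ⟨rB, uB, wB, hB⟩ := hB
  obtain ⟨rC, uC, wC, hC⟩ := hC
  set v : Fin d₁ × Fin d₂ → ℂ := fun p => x p.1 * z p.2 with hv
  set A := (Matrix.vecMulVec x (star x)) ⊗ₖ (Matrix.vecMulVec z (star z)) with hA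
  have hAv : A = Matrix.vecMulVec v (star v) := kron_reshape x z
  -- combined family
  set U : Fin (rB + rC) → Fin d₁ × Fin d₂ → ℂ :=
    Fin.addCases (fun i p => uB i p.1 * wB i p.2) (fun i p => uC i p.1 * wC i p.2) with hU
  have hBv : B = ∑ i : Fin rB, Matrix.vecMulVec (U (Fin.castAdd rC i)) (star (U (Fin.castAdd rC i))) := by
    rw [hB]
    refine Finset.sum_congr rfl fun i _ => ?_
    rw [hU]
    simp only [Fin.addCases_left]
    exact kron_reshape (uB i) (wB i)
  have hCv : C = ∑ i : Fin rC, Matrix.vecMulVec (U (Fin.natAdd rB i)) (star (U (Fin.natAdd rB i))) := by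
    rw [hC]
    refine Finset.sum_congr rfl fun i _ => ?_
    rw [hU]
    simp only [Fin.addCases_right]
    exact kron_reshape (uC i) (wC i)
  have hsum : Matrix.vecMulVec v (star v) = ∑ i, Matrix.vecMulVec (U i) (star (U i)) := by
    rw [Fin.sum_univ_add, ← hBv, ← hCv, ← hAv, h]
  have hc := fun i => key_span v (rB + rC) U hsum i
  choose c hc using hc
  have hterm : ∀ i, Matrix.vecMulVec (U i) (star (U i)) =
      Complex.normSq (c i) • A := by
    intro i; rw [hc i, smul_reshape, hAv]
  set α : ℝ := ∑ i : Fin rB, Complex.normSq (c (Fin.castAdd rC i)) with hα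
  set β : ℝ := ∑ i : Fin rC, Complex.normSq (c (Fin.natAdd rB i)) with hβ
  have hBA : B = α • A := by
    rw [hBv, hα, Finset.sum_smul]
    exact Finset.sum_congr rfl fun i _ => hterm _
  have hCA : C = β • A := by
    rw [hCv, hβ, Finset.sum_smul]
    exact Finset.sum_congr rfl fun i _ => hterm _
  have hαn : 0 ≤ α := Finset.sum_nonneg fun i _ => Complex.normSq_nonneg _
  have hβn : 0 ≤ β := Finset.sum_nonneg fun i _ => Complex.normSq_nonneg _
  by_cases hA0 : A = 0
  · refine ⟨1, 0, zero_le_one, le_refl 0, by norm_num, ?_, ?_⟩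
    · rw [hBA, hA0]; simp
    · rw [hCA, hA0]; simp
  · refine ⟨α, β, hαn, hβn, ?_, hBA, hCA⟩
    have : A = (α + β) • A := by
      rw [add_smul, ← hBA, ← hCA, h]
    have h1 : (1 - (α + β)) • A = 0 := by
      rw [sub_smul, one_smul, ← this, sub_self]
    rcases smul_eq_zero.mp h1 with h2 | h2
    · linarith [sub_eq_zero.mp (by exact_mod_cast h2)]
    · exact absurd h2 hA0
end

section
/- Let d₁ ≥ 2 and d₂ ≥ 2. Then there exists a Hermitian complex (d₁d₂)×(d₁d₂) matrix W such that Re tr(W · ((x xᴴ) ⊗ (z zᴴ))) ≥ 0 for all vectors x ∈ ℂ^{d₁} and z ∈ ℂ^{d₂}, yet W does not belong to the bipartite PSD tensor cone. Hence for bipartite systems the dual cone of the PSD tensor cone strictly contains the PSD tensor cone itself (the cone is not self-dual). -/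
open Matrix Kronecker

section Aux

variable {d₁ d₂ : ℕ}

/-- Factorization of the trace pairing of a "partial-transpose-type" matrix with a product
rank-one matrix. -/
lemma aux_trace_eq (ψ : Fin d₁ → Fin d₂ → ℂ) (hψ : ∀ i j, star (ψ i j) = ψ i j)
    (x : Fin d₁ → ℂ) (z : Fin d₂ → ℂ) :
    ((Matrix.of (fun p q : Fin d₁ × Fin d₂ => ψ p.1 q.2 * ψ q.1 p.2) *
      ((Matrix.vecMulVec x (star x)) ⊗ₖ (Matrix.vecMulVec z (star z)))).trace)
    = (∑ p : Fin d₁ × Fin d₂, ψ p.1 p.2 * x p.1 * star (z p.2)) *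
      star (∑ p : Fin d₁ × Fin d₂, ψ p.1 p.2 * x p.1 * star (z p.2)) := by
  have hstar : star (∑ p : Fin d₁ × Fin d₂, ψ p.1 p.2 * x p.1 * star (z p.2))
      = ∑ p : Fin d₁ × Fin d₂, ψ p.1 p.2 * star (x p.1) * z p.2 := by
    rw [star_sum]
    refine Finset.sum_congr rfl fun p _ => ?_
    simp only [star_mul', star_star, hψ]
  rw [hstar, Finset.sum_mul_sum]
  simp only [Matrix.trace, Matrix.diag, Matrix.mul_apply, Matrix.of_apply,
    Matrix.kroneckerMap_apply, Matrix.vecMulVec_apply, Pi.star_apply]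
  rw [← Finset.sum_product', ← Finset.sum_product']
  refine Fintype.sum_equiv
    ⟨fun pq => ((pq.2.1, pq.1.2), (pq.1.1, pq.2.2)),
     fun pq => ((pq.2.1, pq.1.2), (pq.1.1, pq.2.2)), fun _ => rfl, fun _ => rfl⟩ _ _ ?_
  rintro ⟨⟨p1, p2⟩, ⟨q1, q2⟩⟩
  simp only [Equiv.coe_fn_mk]
  ring

/-- The quadratic form of a Kronecker product of rank-one PSD matrices factors as
`(star c) * c`. -/
lemma aux_qform_eq (u : Fin d₁ → ℂ) (w : Fin d₂ → ℂ) (v : Fin d₁ × Fin d₂ → ℂ) :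
    star v ⬝ᵥ ((Matrix.vecMulVec u (star u)) ⊗ₖ (Matrix.vecMulVec w (star w))).mulVec v
    = star (∑ q : Fin d₁ × Fin d₂, star (u q.1) * star (w q.2) * v q) *
      (∑ q : Fin d₁ × Fin d₂, star (u q.1) * star (w q.2) * v q) := by
  have hstar : star (∑ q : Fin d₁ × Fin d₂, star (u q.1) * star (w q.2) * v q)
      = ∑ q : Fin d₁ × Fin d₂, u q.1 * w q.2 * star (v q) := by
    rw [star_sum]
    refine Finset.sum_congr rfl fun q _ => ?_
    simp only [star_mul', star_star]
  rw [hstar, Finset.sum_mul_sum]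
  simp only [dotProduct, Matrix.mulVec, Matrix.kroneckerMap_apply,
    Matrix.vecMulVec_apply, Pi.star_apply, dotProduct, Finset.mul_sum]
  refine Finset.sum_congr rfl fun p _ => Finset.sum_congr rfl fun q _ => ?_
  ring

lemma aux_sum_mulVec {n : Type*} [Fintype n] {ι : Type*} (s : Finset ι)
    (M : ι → Matrix n n ℂ) (v : n → ℂ) :
    (∑ i ∈ s, M i).mulVec v = ∑ i ∈ s, (M i).mulVec v := by
  funext j
  simp [Matrix.mulVec, dotProduct, Matrix.sum_apply, Finset.sum_mul,
    Finset.sum_apply]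
  rw [Finset.sum_comm]

lemma aux_dotProduct_sum {n : Type*} [Fintype n] {ι : Type*} (s : Finset ι)
    (f : ι → n → ℂ) (x : n → ℂ) :
    x ⬝ᵥ (∑ i ∈ s, f i) = ∑ i ∈ s, x ⬝ᵥ f i := by
  simp [dotProduct, Finset.sum_apply, Finset.mul_sum]
  rw [Finset.sum_comm]

lemma aux_star_mul_self_re_nonneg (c : ℂ) : 0 ≤ (star c * c).re := by
  have : star c * c = (Complex.normSq c : ℂ) := by
    rw [Complex.star_def, mul_comm, Complex.mul_conj]
  rw [this]
  simpa using Complex.normSq_nonneg c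

end Aux

/-- For bipartite systems with both local dimensions at least 2, there is a Hermitian matrix
pairing nonnegatively with all rank-one product matrices (hence lying in the dual cone of
the bipartite PSD tensor cone) that is not itself in the cone: the cone is not self-dual. -/
theorem bipartite_psd_cone_not_self_dual (d₁ d₂ : ℕ) (h₁ : 2 ≤ d₁) (h₂ : 2 ≤ d₂) :
    ∃ W : Matrix (Fin d₁ × Fin d₂) (Fin d₁ × Fin d₂) ℂ, W.IsHermitian ∧
      (∀ (x : Fin d₁ → ℂ) (z : Fin d₂ → ℂ),
        0 ≤ ((W * ((Matrix.vecMulVec x (star x)) ⊗ₖ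
          (Matrix.vecMulVec z (star z)))).trace).re) ∧
      ¬ InBipartitePSDCone W := by
  set a0 : Fin d₁ := ⟨0, by omega⟩ with ha0
  set a1 : Fin d₁ := ⟨1, by omega⟩ with ha1
  set b0 : Fin d₂ := ⟨0, by omega⟩ with hb0
  set b1 : Fin d₂ := ⟨1, by omega⟩ with hb1
  have ha : a0 ≠ a1 := by simp [ha0, ha1, Fin.ext_iff]
  have hb : b0 ≠ b1 := by simp [hb0, hb1, Fin.ext_iff]
  set ψ : Fin d₁ → Fin d₂ → ℂ :=
    fun i j => if i = a0 ∧ j = b0 then 1 else if i = a1 ∧ j = b1 then 1 else 0 with hψdef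
  have hψ : ∀ i j, star (ψ i j) = ψ i j := by
    intro i j
    simp only [hψdef]
    split_ifs <;> simp
  -- special values of ψ
  have hψ00 : ψ a0 b0 = 1 := by simp [hψdef]
  have hψ11 : ψ a1 b1 = 1 := by simp [hψdef, ha.symm, hb.symm]
  have hψ01 : ψ a0 b1 = 0 := by simp [hψdef, ha, hb.symm]
  have hψ10 : ψ a1 b0 = 0 := by simp [hψdef, ha.symm, hb]
  refine ⟨Matrix.of (fun p q : Fin d₁ × Fin d₂ => ψ p.1 q.2 * ψ q.1 p.2), ?_, ?_, ?_⟩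
  · -- Hermitian
    ext p q
    simp only [Matrix.conjTranspose_apply, Matrix.of_apply, star_mul', hψ]
    ring
  · -- nonnegative pairing with all product rank-one matrices
    intro x z
    rw [aux_trace_eq ψ hψ x z]
    set s := ∑ p : Fin d₁ × Fin d₂, ψ p.1 p.2 * x p.1 * star (z p.2)
    have := aux_star_mul_self_re_nonneg (star s)
    simpa [mul_comm] using this
  · -- not in the cone
    rintro ⟨r, u, w, hW⟩
    set W := Matrix.of (fun p q : Fin d₁ × Fin d₂ => ψ p.1 q.2 * ψ q.1 p.2) with hWdef
    set a : Fin d₁ × Fin d₂ := (a0, b1) with hadef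
    set b : Fin d₁ × Fin d₂ := (a1, b0) with hbdef
    set v : Fin d₁ × Fin d₂ → ℂ := Pi.single a 1 - Pi.single b 1 with hvdef
    have hsv : star v = v := by
      funext p
      simp only [hvdef, Pi.star_apply, Pi.sub_apply, Pi.single_apply]
      split_ifs <;> simp
    -- quadratic form of W at v is -2
    have hWab : W a b = 1 := by
      simp [hWdef, hadef, hbdef, hψ00, hψ11]
    have hWba : W b a = 1 := by
      simp [hWdef, hadef, hbdef, hψ00, hψ11]
    have hWaa : W a a = 0 := by
      simp [hWdef, hadef, hψ01]
    have hWbb : W b b = 0 := by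
      simp [hWdef, hbdef, hψ10]
    have hq : star v ⬝ᵥ W.mulVec v = -2 := by
      rw [hsv, hvdef, Matrix.mulVec_sub, Matrix.mulVec_single, Matrix.mulVec_single,
        sub_dotProduct, dotProduct_sub, dotProduct_sub]
      simp only [single_dotProduct, MulOpposite.op_one, one_smul, Matrix.col_apply]
      rw [hWab, hWba, hWaa, hWbb]
      ring
    -- but the quadratic form of a cone element has nonnegative real part
    have hq' : star v ⬝ᵥ W.mulVec v
        = ∑ i : Fin r, star v ⬝ᵥ
            ((Matrix.vecMulVec (u i) (star (u i))) ⊗ₖ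
              (Matrix.vecMulVec (w i) (star (w i)))).mulVec v := by
      rw [hW, aux_sum_mulVec, aux_dotProduct_sum]
    have hnn : 0 ≤ (star v ⬝ᵥ W.mulVec v).re := by
      rw [hq', Complex.re_sum]
      refine Finset.sum_nonneg fun i _ => ?_
      rw [aux_qform_eq]
      exact aux_star_mul_self_re_nonneg _
    rw [hq] at hnn
    norm_num at hnn
end

section
/- Let Z_A be a complex n×n density matrix and Z_B a complex m×m density matrix, and let Z = Z_A ⊗ Z_B be their Kronecker product. Then the following three tensor McCormick matrix inequalities hold: (I ⊗ Z_B) − Z is positive semidefinite, (Z_A ⊗ I) − Z is positive semidefinite, and Z − (I ⊗ Z_B) − (Z_A ⊗ I) + I is positive semidefinite, where the identity matrices I are of the appropriate sizes (n×n, m×m, or nm×nm). -/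
open Matrix Kronecker
open scoped ComplexOrder

lemma kron_psd {n m : ℕ} {A : Matrix (Fin n) (Fin n) ℂ} {B : Matrix (Fin m) (Fin m) ℂ}
    (hA : A.PosSemidef) (hB : B.PosSemidef) : (A ⊗ₖ B).PosSemidef := by
  obtain ⟨C, rfl⟩ := (by open scoped MatrixOrder in exact CStarAlgebra.nonneg_iff_eq_star_mul_self.mp hA.nonneg :
    ∃ C : Matrix (Fin n) (Fin n) ℂ, A = Cᴴ * C)
  obtain ⟨D, rfl⟩ := (by open scoped MatrixOrder in exact CStarAlgebra.nonneg_iff_eq_star_mul_self.mp hB.nonneg :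
    ∃ C : Matrix (Fin m) (Fin m) ℂ, B = Cᴴ * C)
  rw [Matrix.mul_kronecker_mul]
  have h : (Cᴴ ⊗ₖ Dᴴ) = (C ⊗ₖ D)ᴴ := by
    ext ⟨i, j⟩ ⟨k, l⟩
    simp [Matrix.conjTranspose_apply, Matrix.kroneckerMap_apply, mul_comm]
  rw [h]
  exact Matrix.posSemidef_conjTranspose_mul_self _

lemma one_sub_psd {n : ℕ} {A : Matrix (Fin n) (Fin n) ℂ}
    (hA : A.PosSemidef) (htr : A.trace = 1) :
    ((1 : Matrix (Fin n) (Fin n) ℂ) - A).PosSemidef := by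
  have hH := hA.1
  have hUU : (star (hH.eigenvectorUnitary : Matrix (Fin n) (Fin n) ℂ)) *
      (hH.eigenvectorUnitary : Matrix (Fin n) (Fin n) ℂ) = 1 :=
    Matrix.mem_unitaryGroup_iff'.mp (hH.eigenvectorUnitary).2
  have hUU' : (hH.eigenvectorUnitary : Matrix (Fin n) (Fin n) ℂ) *
      (star (hH.eigenvectorUnitary : Matrix (Fin n) (Fin n) ℂ)) = 1 :=
    Matrix.mem_unitaryGroup_iff.mp (hH.eigenvectorUnitary).2
  -- sum of eigenvalues is 1
  have htr' : ∑ i, (hH.eigenvalues i : ℂ) = 1 := by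
    have := congrArg Matrix.trace hH.spectral_theorem
    rw [htr, Unitary.conjStarAlgAut_apply, Matrix.trace_mul_cycle, hUU, Matrix.one_mul,
      Matrix.trace_diagonal] at this
    simpa using this.symm
  have hsum : ∑ i, hH.eigenvalues i = 1 := by
    have : ((∑ i, hH.eigenvalues i : ℝ) : ℂ) = 1 := by push_cast; simpa using htr'
    exact_mod_cast this
  have hle : ∀ i, hH.eigenvalues i ≤ 1 := by
    intro i
    rw [← hsum]
    exact Finset.single_le_sum (fun j _ => hA.eigenvalues_nonneg j) (Finset.mem_univ i)
  have key : (1 : Matrix (Fin n) (Fin n) ℂ) - A =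
      (hH.eigenvectorUnitary : Matrix (Fin n) (Fin n) ℂ) *
        Matrix.diagonal (fun i => (1 : ℂ) - (hH.eigenvalues i : ℂ)) *
        (star (hH.eigenvectorUnitary : Matrix (Fin n) (Fin n) ℂ)) := by
    have hdd : Matrix.diagonal (fun i => (1 : ℂ) - (hH.eigenvalues i : ℂ)) =
        1 - Matrix.diagonal (RCLike.ofReal ∘ hH.eigenvalues) := by
      rw [← Matrix.diagonal_one, Matrix.diagonal_sub]
      rfl
    rw [hdd, Matrix.mul_sub, Matrix.sub_mul, Matrix.mul_one, hUU', ← Unitary.conjStarAlgAut_apply (S := ℂ), ← hH.spectral_theorem]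
  rw [key]
  refine Matrix.PosSemidef.mul_mul_conjTranspose_same ?_ _
  refine Matrix.posSemidef_diagonal_iff.mpr fun i => ?_
  rw [sub_nonneg]
  exact_mod_cast hle i

/-- Tensor McCormick inequalities: for density matrices `Z_A`, `Z_B` and
`Z = Z_A ⊗ Z_B`, the matrices `(I ⊗ Z_B) - Z`, `(Z_A ⊗ I) - Z`, and
`Z - (I ⊗ Z_B) - (Z_A ⊗ I) + I` are positive semidefinite. -/
theorem tensor_mccormick (n m : ℕ)
    (ZA : Matrix (Fin n) (Fin n) ℂ) (ZB : Matrix (Fin m) (Fin m) ℂ)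
    (hA : ZA.PosSemidef) (hAtr : ZA.trace = 1)
    (hB : ZB.PosSemidef) (hBtr : ZB.trace = 1) :
    (((1 : Matrix (Fin n) (Fin n) ℂ) ⊗ₖ ZB) - ZA ⊗ₖ ZB).PosSemidef ∧
    ((ZA ⊗ₖ (1 : Matrix (Fin m) (Fin m) ℂ)) - ZA ⊗ₖ ZB).PosSemidef ∧
    (ZA ⊗ₖ ZB - ((1 : Matrix (Fin n) (Fin n) ℂ) ⊗ₖ ZB)
      - (ZA ⊗ₖ (1 : Matrix (Fin m) (Fin m) ℂ))
      + (1 : Matrix (Fin n × Fin m) (Fin n × Fin m) ℂ)).PosSemidef := by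
  have h1A := one_sub_psd hA hAtr
  have h1B := one_sub_psd hB hBtr
  refine ⟨?_, ?_, ?_⟩
  · have : ((1 : Matrix (Fin n) (Fin n) ℂ) ⊗ₖ ZB) - ZA ⊗ₖ ZB =
        ((1 : Matrix (Fin n) (Fin n) ℂ) - ZA) ⊗ₖ ZB := by
      ext ⟨i, j⟩ ⟨k, l⟩
      simp [Matrix.kroneckerMap_apply, Matrix.sub_apply]
      ring
    rw [this]
    exact kron_psd h1A hB
  · have : (ZA ⊗ₖ (1 : Matrix (Fin m) (Fin m) ℂ)) - ZA ⊗ₖ ZB =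
        ZA ⊗ₖ ((1 : Matrix (Fin m) (Fin m) ℂ) - ZB) := by
      ext ⟨i, j⟩ ⟨k, l⟩
      simp [Matrix.kroneckerMap_apply, Matrix.sub_apply]
      ring
    rw [this]
    exact kron_psd hA h1B
  · have : ZA ⊗ₖ ZB - ((1 : Matrix (Fin n) (Fin n) ℂ) ⊗ₖ ZB)
        - (ZA ⊗ₖ (1 : Matrix (Fin m) (Fin m) ℂ))
        + (1 : Matrix (Fin n × Fin m) (Fin n × Fin m) ℂ) =
        ((1 : Matrix (Fin n) (Fin n) ℂ) - ZA) ⊗ₖ ((1 : Matrix (Fin m) (Fin m) ℂ) - ZB) := by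
      ext ⟨i, j⟩ ⟨k, l⟩
      simp [Matrix.kroneckerMap_apply, Matrix.sub_apply, Matrix.add_apply, Matrix.one_apply,
        Prod.ext_iff]
      split_ifs <;> (try tauto) <;> ring
    rw [this]
    exact kron_psd h1A h1B
end
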